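/- Forest expansion of the power sum: for a finite connected graph with rates k, antisymmetric q, and spanning 2-forest sets ℱ^{x→y} (one tree rooted at y containing x, the other rooted arbitrarily), one has Σ_y w(ℱ^{x→y}) P(y) = Σ_{z,y} Σ_{F ∈ ℱ^{x→y}, (z,y) ∉ F} w(F) k(y,z) q(y,z) for every vertex x, where P(y) = Σ_z k(y,z) q(y,z): terms where the reversed edge (z,y) lies in the forest cancel pairwise by antisymmetry of q. -/
import Mathlib


open Finset
open scoped Classical

variable {V : Type*} [Fintype V] [DecidableEq V]

/-- Weight of a parent-map encoded oriented subgraph. -/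
noncomputable def wt (k : V → V → ℝ) (p : V → V) : ℝ :=
  ∏ v ∈ Finset.univ.filter (fun v => p v ≠ v), k v (p v)

/-- `p` encodes a spanning 2-forest of `G`, one tree rooted at `z` containing `x`, the
other tree rooted arbitrarily. -/
def IsTwoForestTo (G : SimpleGraph V) (x z : V) (p : V → V) : Prop :=
  p z = z ∧
  (∃ r, r ≠ z ∧ p r = r ∧ ∀ v, p v = v → v = z ∨ v = r) ∧
  (∀ v, p v ≠ v → G.Adj v (p v)) ∧
  (∀ v, ∃ n, p (p^[n] v) = p^[n] v) ∧
  (∃ n, p^[n] x = z)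

/-- reverse the edge `z → y`: `z` becomes a root, `y` points to `z`. -/
def rev (p : V → V) (y z : V) : V → V := fun v => if v = z then z else if v = y then z else p v

lemma rev_eq_of_ne {p : V → V} {y z v : V} (h1 : v ≠ y) (h2 : v ≠ z) : rev p y z v = p v := by
  simp [rev, h1, h2]

lemma rev_z {p : V → V} {y z : V} : rev p y z z = z := by simp [rev]

lemma rev_y {p : V → V} {y z : V} (h : y ≠ z) : rev p y z y = z := by simp [rev, h]

lemma rev_rev {p : V → V} {y z : V} (hy : p y = y) (hz : p z = y) :
    rev (rev p y z) z y = p := by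
  funext v
  by_cases h1 : v = y
  · subst h1; simp [rev, hy]
  · by_cases h2 : v = z
    · subst h2; simp [rev, h1, hz]
    · rw [rev_eq_of_ne h2 h1, rev_eq_of_ne h1 h2]

lemma rev_self {p : V → V} {y : V} (hy : p y = y) : rev p y y = p := by
  funext v
  by_cases h : v = y
  · subst h; simp [rev, hy]
  · rw [rev_eq_of_ne h h]

lemma iterate_rev_eq {p : V → V} {y z : V} :
    ∀ n (v : V), (∀ m, m < n → p^[m] v ≠ y ∧ p^[m] v ≠ z) → (rev p y z)^[n] v = p^[n] v := by
  intro n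
  induction n with
  | zero => simp
  | succ n ih =>
    intro v hv
    rw [Function.iterate_succ_apply', Function.iterate_succ_apply',
      ih v (fun m hm => hv m (Nat.lt_succ_of_lt hm)),
      rev_eq_of_ne (hv n (Nat.lt_succ_self n)).1 (hv n (Nat.lt_succ_self n)).2]

lemma rev_forest {G : SimpleGraph V} {x y z : V} {p : V → V}
    (h : IsTwoForestTo G x y p) (hz : p z = y) (hzy : z ≠ y) :
    IsTwoForestTo G x z (rev p y z) := by
  obtain ⟨hy, ⟨r, hry, hr, hfix⟩, hadj, hreach, n, hnx⟩ := h
  have hyz : y ≠ z := hzy.symm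
  have hpzz : p z ≠ z := by rw [hz]; exact hyz
  have hrz : r ≠ z := fun hh => hpzz (hh ▸ hr)
  have hp'z : rev p y z z = z := rev_z
  have hp'y : rev p y z y = z := rev_y hyz
  have hp'r : rev p y z r = r := by rw [rev_eq_of_ne hry hrz, hr]
  have hfix' : ∀ v, rev p y z v = v → v = z ∨ v = r := by
    intro v hv
    by_cases h1 : v = z
    · exact Or.inl h1
    by_cases h2 : v = y
    · exact absurd (h2 ▸ hv) (by rw [hp'y]; exact hzy)
    · rw [rev_eq_of_ne h2 h1] at hv
      rcases hfix v hv with h3 | h3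
      · exact absurd h3 h2
      · exact Or.inr h3
  -- every p-trajectory eventually hits y, z or r
  have key : ∀ v, (∃ m, p^[m] v = y ∨ p^[m] v = z ∨ p^[m] v = r) →
      ∃ N, ((rev p y z)^[N] v = z ∨ (rev p y z)^[N] v = r) := by
    intro v hex
    set Q : ℕ → Prop := fun m => p^[m] v = y ∨ p^[m] v = z ∨ p^[m] v = r with hQ
    have hexQ : ∃ m, Q m := hex
    set N := Nat.find hexQ with hN
    have hspec := Nat.find_spec hexQ
    have hmin : ∀ m, m < N → p^[m] v ≠ y ∧ p^[m] v ≠ z := by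
      intro m hm
      have := Nat.find_min hexQ hm
      simp only [hQ, not_or] at this
      exact ⟨this.1, this.2.1⟩
    have hNN : (rev p y z)^[N] v = p^[N] v := iterate_rev_eq N v hmin
    rcases hspec with h1 | h1 | h1
    · refine ⟨N + 1, Or.inl ?_⟩
      rw [Function.iterate_succ_apply', hNN, h1, hp'y]
    · exact ⟨N, Or.inl (hNN.trans h1)⟩
    · exact ⟨N, Or.inr (hNN.trans h1)⟩
  refine ⟨hp'z, ⟨r, hrz, hp'r, hfix'⟩, ?_, ?_, ?_⟩
  · intro v hv
    by_cases h1 : v = z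
    · exact absurd (h1 ▸ hp'z : rev p y z v = v) hv
    by_cases h2 : v = y
    · subst h2
      rw [hp'y]
      have : G.Adj z (p z) := hadj z hpzz
      rw [hz] at this
      exact this.symm
    · rw [rev_eq_of_ne h2 h1] at hv ⊢
      exact hadj v hv
  · intro v
    obtain ⟨m0, hm0⟩ := hreach v
    have : ∃ m, p^[m] v = y ∨ p^[m] v = z ∨ p^[m] v = r := by
      rcases hfix _ hm0 with h1 | h1
      · exact ⟨m0, Or.inl h1⟩
      · exact ⟨m0, Or.inr (Or.inr h1)⟩
    obtain ⟨N, hN⟩ := key v this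
    rcases hN with h1 | h1
    · exact ⟨N, by rw [h1, hp'z]⟩
    · exact ⟨N, by rw [h1, hp'r]⟩
  · -- x reaches z
    set Q : ℕ → Prop := fun m => p^[m] x = y ∨ p^[m] x = z ∨ p^[m] x = r with hQ
    have hexQ : ∃ m, Q m := ⟨n, Or.inl hnx⟩
    set N := Nat.find hexQ with hNdef
    have hspec := Nat.find_spec hexQ
    have hmin : ∀ m, m < N → p^[m] x ≠ y ∧ p^[m] x ≠ z := by
      intro m hm
      have := Nat.find_min hexQ hm
      simp only [hQ, not_or] at this
      exact ⟨this.1, this.2.1⟩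
    have hNN : (rev p y z)^[N] x = p^[N] x := iterate_rev_eq N x hmin
    rcases hspec with h1 | h1 | h1
    · exact ⟨N + 1, by rw [Function.iterate_succ_apply', hNN, h1, hp'y]⟩
    · exact ⟨N, hNN.trans h1⟩
    · -- impossible: x never reaches r
      exfalso
      have hNn : N ≤ n := by
        by_contra hc
        exact (hmin n (Nat.lt_of_not_le hc)).1 hnx
      have : p^[n] x = r := by
        rw [show n = (n - N) + N from (Nat.sub_add_cancel hNn).symm,
          Function.iterate_add_apply, h1, Function.iterate_fixed hr]
      exact hry (this.symm.trans hnx)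

lemma wt_rev {k : V → V → ℝ} {y z : V} {p : V → V} (hy : p y = y) (hz : p z = y)
    (hzy : z ≠ y) :
    wt k p * k y z = wt k (rev p y z) * k z y := by
  have hyz : y ≠ z := hzy.symm
  have hzS : z ∈ Finset.univ.filter (fun v => p v ≠ v) := by
    simp only [mem_filter, mem_univ, true_and]
    rw [hz]; exact hyz
  have hyS' : y ∈ Finset.univ.filter (fun v => rev p y z v ≠ v) := by
    simp only [mem_filter, mem_univ, true_and]
    rw [rev_y hyz]; exact hzy
  have hE : (Finset.univ.filter (fun v => rev p y z v ≠ v)).erase y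
      = (Finset.univ.filter (fun v => p v ≠ v)).erase z := by
    ext v
    simp only [mem_erase, mem_filter, mem_univ, true_and]
    constructor
    · rintro ⟨h1, h2⟩
      by_cases h3 : v = z
      · exact absurd (h3 ▸ rev_z : rev p y z v = v) h2
      · rw [rev_eq_of_ne h1 h3] at h2; exact ⟨h3, h2⟩
    · rintro ⟨h1, h2⟩
      have h3 : v ≠ y := fun hh => h2 (hh ▸ hy)
      rw [rev_eq_of_ne h3 h1]
      exact ⟨h3, h2⟩
  have e1 : wt k p = k z y * ∏ v ∈ (Finset.univ.filter (fun v => p v ≠ v)).erase z, k v (p v) := by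
    rw [wt, ← Finset.mul_prod_erase _ _ hzS, hz]
  have e2 : wt k (rev p y z)
      = k y z * ∏ v ∈ (Finset.univ.filter (fun v => p v ≠ v)).erase z, k v (p v) := by
    rw [wt, ← Finset.mul_prod_erase _ _ hyS', rev_y hyz, hE]
    congr 1
    refine Finset.prod_congr rfl ?_
    intro v hv
    simp only [mem_erase, mem_filter, mem_univ, true_and] at hv
    have h3 : v ≠ y := fun hh => hv.2 (hh ▸ hy)
    rw [rev_eq_of_ne h3 hv.1]
  rw [e1, e2]; ring

/-- `w(ℱ^{x→z})`. -/
noncomputable def forestSum (G : SimpleGraph V) (k : V → V → ℝ) (x z : V) : ℝ :=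
  ∑ p ∈ Finset.univ.filter (fun p : V → V => IsTwoForestTo G x z p), wt k p

/-- forest expansion of the power sum:
`Σ_y w(ℱ^{x→y}) P(y) = Σ_{z,y} Σ_{F ∈ ℱ^{x→y}, (z,y) ∉ F} w(F) k(y,z) q(y,z)`;
the terms where the reversed edge `(z,y)` lies in the forest cancel pairwise by the
antisymmetry of `q`. -/
theorem stmt18 (G : SimpleGraph V) (hG : G.Connected)
    (k : V → V → ℝ)
    (hk : ∀ a b, 0 < k a b ↔ G.Adj a b)
    (hk0 : ∀ a b, ¬ G.Adj a b → k a b = 0)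
    (q : V → V → ℝ) (hqa : ∀ a b, q a b = - q b a)
    (x : V) :
    ∑ y, forestSum G k x y * (∑ z, k y z * q y z)
      = ∑ y, ∑ z,
          ∑ p ∈ Finset.univ.filter
              (fun p : V → V => IsTwoForestTo G x y p ∧ p z ≠ y),
            wt k p * k y z * q y z := by
  classical
  have hq0 : ∀ a, q a a = 0 := fun a => by have := hqa a a; linarith
  have expand : ∑ y, forestSum G k x y * (∑ z, k y z * q y z)
      = ∑ y, ∑ z, ∑ p ∈ Finset.univ.filter (fun p : V → V => IsTwoForestTo G x y p),
          wt k p * k y z * q y z := by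
    refine Finset.sum_congr rfl fun y _ => ?_
    rw [forestSum, Finset.sum_mul]
    simp_rw [Finset.mul_sum]
    rw [Finset.sum_comm]
    simp_rw [mul_assoc]
  rw [expand]
  have split : ∀ y z : V,
      (∑ p ∈ Finset.univ.filter (fun p : V → V => IsTwoForestTo G x y p),
          wt k p * k y z * q y z)
      = (∑ p ∈ Finset.univ.filter
            (fun p : V → V => IsTwoForestTo G x y p ∧ p z ≠ y),
          wt k p * k y z * q y z)
        + (∑ p ∈ Finset.univ.filter
            (fun p : V → V => IsTwoForestTo G x y p ∧ p z = y),
          wt k p * k y z * q y z) := by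
    intro y z
    rw [← Finset.sum_filter_add_sum_filter_not
      (Finset.univ.filter (fun p : V → V => IsTwoForestTo G x y p))
      (fun p => p z ≠ y)]
    congr 1
    · rw [Finset.filter_filter]
    · rw [Finset.filter_filter]
      congr 1
      ext p
      simp [not_not]
  simp_rw [split, Finset.sum_add_distrib]
  have bad : ∑ y, ∑ z, ∑ p ∈ Finset.univ.filter
      (fun p : V → V => IsTwoForestTo G x y p ∧ p z = y),
      wt k p * k y z * q y z = 0 := by
    have flat : ∑ y, ∑ z, ∑ p ∈ Finset.univ.filter
        (fun p : V → V => IsTwoForestTo G x y p ∧ p z = y),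
        wt k p * k y z * q y z
        = ∑ t : V × V × (V → V),
            (if IsTwoForestTo G x t.1 t.2.2 ∧ t.2.2 t.2.1 = t.1 then
              wt k t.2.2 * k t.1 t.2.1 * q t.1 t.2.1 else 0) := by
      simp_rw [Finset.sum_filter, Fintype.sum_prod_type]
    rw [flat]
    set f : V × V × (V → V) → ℝ := fun t =>
      if IsTwoForestTo G x t.1 t.2.2 ∧ t.2.2 t.2.1 = t.1 then
        wt k t.2.2 * k t.1 t.2.1 * q t.1 t.2.1 else 0 with hf
    set g : V × V × (V → V) → V × V × (V → V) := fun t =>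
      if IsTwoForestTo G x t.1 t.2.2 ∧ t.2.2 t.2.1 = t.1 then
        (t.2.1, t.1, rev t.2.2 t.1 t.2.1) else t with hg
    have hCond : ∀ y z : V, ∀ p : V → V,
        (IsTwoForestTo G x y p ∧ p z = y) → z ≠ y →
        IsTwoForestTo G x z (rev p y z) ∧ (rev p y z) y = z := by
      intro y z p ⟨h1, h2⟩ hzy
      exact ⟨rev_forest h1 h2 hzy, rev_y hzy.symm⟩
    refine Finset.sum_ninvolution g ?_ ?_ (fun t => Finset.mem_univ _) ?_
    · rintro ⟨y, z, p⟩
      by_cases hc : IsTwoForestTo G x y p ∧ p z = y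
      · by_cases hzy : z = y
        · subst hzy
          have hgt : g (z, z, p) = (z, z, p) := by
            simp only [hg, if_pos hc, rev_self hc.1.1]
          rw [hgt]
          simp only [hf, if_pos hc, hq0, mul_zero]
          ring
        · have hc' := hCond y z p hc hzy
          have hgt : g (y, z, p) = (z, y, rev p y z) := by
            simp only [hg, if_pos hc]
          rw [hgt]
          simp only [hf, if_pos hc, if_pos hc']
          have hw := wt_rev (k := k) hc.1.1 hc.2 hzy

          linear_combination q y z * hw + wt k (rev p y z) * k z y * hqa z y
      · have hgt : g (y, z, p) = (y, z, p) := by simp only [hg, if_neg hc]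
        rw [hgt]
        simp only [hf, if_neg hc]
        ring
    · rintro ⟨y, z, p⟩ hfne hgt
      apply hfne
      by_cases hc : IsTwoForestTo G x y p ∧ p z = y
      · simp only [hg, if_pos hc] at hgt
        have hzy : z = y := congrArg Prod.fst hgt
        simp only [hf, if_pos hc, hzy, hq0, mul_zero]
        split_ifs <;> rfl
      · simp only [hf, if_neg hc]
    · rintro ⟨y, z, p⟩
      by_cases hc : IsTwoForestTo G x y p ∧ p z = y
      · by_cases hzy : z = y
        · subst hzy
          have hgt : g (z, z, p) = (z, z, p) := by
            simp only [hg, if_pos hc, rev_self hc.1.1]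
          rw [hgt, hgt]
        · have hc' := hCond y z p hc hzy
          have hgt : g (y, z, p) = (z, y, rev p y z) := by simp only [hg, if_pos hc]
          rw [hgt]
          simp only [hg, if_pos hc']
          rw [rev_rev hc.1.1 hc.2]
      · have hgt : g (y, z, p) = (y, z, p) := by simp only [hg, if_neg hc]
        rw [hgt, hgt]
  rw [bad, add_zero]
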